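/- Let X be a finite quandle such that X = Y₁ ∪ Y₂, where Y₁ and Y₂ are two disjoint orbits of the inner group Inn(X). Assume that there exists a quandle isomorphism between the subquandles Y₁ and Y₂, and that Y₁ is commutative (i ▷ j = j for all i,j ∈ Y₁). Let n = |Y₁|. Then X is isomorphic as a quandle to the quandle on (ℤ/nℤ) × {1,2} with operation (i,a) ▷ (j,b) = (j,b) if a = b and (j+1,b) if a ≠ b; equivalently, to the quandle on {1,…,2n} whose translations are φᵢ = (n+1 n+2 ⋯ 2n) for 1 ≤ i ≤ n and φᵢ = (1 2 ⋯ n) for n+1 ≤ i ≤ 2n. -/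

import Mathlib

open Quandles

/-- The inner group of a rack: the subgroup of permutations generated by the
translations `φᵢ = (i ◃ ·)`. -/
def quandleInn (X : Type) [Rack X] : Subgroup (Equiv.Perm X) :=
  Subgroup.closure (Set.range (fun i : X => Rack.act' i))

section Aux

variable {X : Type} [Quandle X] [Finite X]

lemma quandleInn.act_mem (a : X) : Rack.act' a ∈ quandleInn X :=
  Subgroup.subset_closure (Set.mem_range_self a)

lemma act_mem_orbit (a y : X) : a ◃ y ∈ MulAction.orbit (quandleInn X) y :=
  ⟨⟨Rack.act' a, quandleInn.act_mem a⟩, rfl⟩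

lemma aux (A B : Set X) (x y : X)
    (hA : A = MulAction.orbit (quandleInn X) x)
    (hB : B = MulAction.orbit (quandleInn X) y)
    (hcover : A ∪ B = Set.univ)
    (hcA : ∀ a ∈ A, ∀ b ∈ A, a ◃ b = b)
    (hcB : ∀ a ∈ B, ∀ b ∈ B, a ◃ b = b) :
    (∀ b ∈ B, ∀ z ∈ A, b ◃ z = y ◃ z) ∧
    (∀ z ∈ A, ∃ k : ℕ, z = (fun w => y ◃ w)^[k] x) ∧
    (∀ (k : ℕ), ∀ z ∈ A, (fun w => y ◃ w)^[k] z ∈ A) ∧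
    A.ncard = Function.minimalPeriod (fun w => y ◃ w) x := by
  have hxA : x ∈ A := hA ▸ MulAction.mem_orbit_self x
  have horbz : ∀ z ∈ A, MulAction.orbit (quandleInn X) z = A := by
    intro z hz
    rw [hA] at hz ⊢
    exact MulAction.orbit_eq_iff.mpr hz
  have hmemA : ∀ (a : X), ∀ z ∈ A, a ◃ z ∈ A := by
    intro a z hz
    exact (horbz z hz) ▸ act_mem_orbit a z
  have hGA : ∀ G : Equiv.Perm X, G ∈ quandleInn X → ∀ z ∈ A, G z ∈ A := by
    intro G hG z hz
    exact (horbz z hz) ▸ ⟨⟨G, hG⟩, rfl⟩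
  have hcases : ∀ a : X, a ∈ A ∨ a ∈ B := by
    intro a
    have : a ∈ A ∪ B := hcover ▸ Set.mem_univ a
    exact this
  have hconjA : ∀ a b z, z ∈ A → (a ◃ b) ◃ z = b ◃ z := by
    intro a b z hz
    rcases hcases a with ha | ha
    · have h2 : a ◃ (b ◃ z) = (a ◃ b) ◃ (a ◃ z) := Shelf.self_distrib
      rw [hcA a ha z hz] at h2
      rw [hcA a ha _ (hmemA b z hz)] at h2
      exact h2.symm
    · rcases hcases b with hb | hb
      · rw [hcA _ (hmemA a b hb) z hz, hcA b hb z hz]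
      · rw [hcB a ha b hb]
  -- all elements of the orbit of any c act the same way on A as c does
  have hsame : ∀ G : Equiv.Perm X, G ∈ quandleInn X → ∀ c z, z ∈ A → (G c) ◃ z = c ◃ z := by
    intro G hG
    refine Subgroup.closure_induction ?_ ?_ ?_ ?_ hG
    · rintro _ ⟨a, rfl⟩ c z hz
      exact hconjA a c z hz
    · intro c z hz; rfl
    · intro G H _ _ ihG ihH c z hz
      have h : (G * H) c = G (H c) := rfl
      rw [h, ihG (H c) z hz, ihH c z hz]
    · intro G _ ihG c z hz
      have h := ihG (G⁻¹ c) z hz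
      rw [← Equiv.Perm.mul_apply, mul_inv_cancel, Equiv.Perm.one_apply] at h
      exact h.symm
  have hkeyA : ∀ b ∈ B, ∀ z ∈ A, b ◃ z = y ◃ z := by
    intro b hb z hz
    rw [hB] at hb
    obtain ⟨⟨G, hG⟩, rfl⟩ := hb
    exact hsame G hG y z hz
  set σ : X → X := fun w => y ◃ w with hσdef
  have hσA : ∀ (k : ℕ), ∀ z ∈ A, σ^[k] z ∈ A := by
    intro k
    induction k with
    | zero => intro z hz; exact hz
    | succ k ih =>
      intro z hz
      rw [Function.iterate_succ_apply']
      exact hmemA y _ (ih z hz)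
  -- σ has finite order
  obtain ⟨d, hdpos, hd⟩ : ∃ d : ℕ, 0 < d ∧ σ^[d] = id := by
    refine ⟨orderOf (Rack.act' y), orderOf_pos _, ?_⟩
    have h : (Rack.act' y) ^ (orderOf (Rack.act' y)) = 1 := pow_orderOf_eq_one _
    have h2 : σ^[orderOf (Rack.act' y)] = ⇑((Rack.act' y) ^ (orderOf (Rack.act' y))) := by
      rw [← Equiv.Perm.iterate_eq_pow]
      rfl
    rw [h2, h]
    rfl
  have hiter : ∀ G : Equiv.Perm X, G ∈ quandleInn X → ∀ z ∈ A, ∃ k : ℕ, G z = σ^[k] z := by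
    intro G hG
    refine Subgroup.closure_induction ?_ ?_ ?_ ?_ hG
    · rintro _ ⟨a, rfl⟩ z hz
      rcases hcases a with ha | ha
      · exact ⟨0, hcA a ha z hz⟩
      · exact ⟨1, hkeyA a ha z hz⟩
    · intro z hz; exact ⟨0, rfl⟩
    · intro G H _ _ ihG ihH z hz
      obtain ⟨k, hk⟩ := ihH z hz
      obtain ⟨m, hm⟩ := ihG (σ^[k] z) (hσA k z hz)
      refine ⟨m + k, ?_⟩
      have h : (G * H) z = G (H z) := rfl
      rw [h, hk, hm, Function.iterate_add_apply]
    · intro G hGmem ihG z hz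
      have hz' : G⁻¹ z ∈ A := hGA G⁻¹ (inv_mem hGmem) z hz
      obtain ⟨k, hk⟩ := ihG (G⁻¹ z) hz'
      rw [← Equiv.Perm.mul_apply, mul_inv_cancel, Equiv.Perm.one_apply] at hk
      refine ⟨k * (d - 1), ?_⟩
      have hkd : k * (d - 1) + k = d * k := by
        cases d with
        | zero => omega
        | succ d => simp [Nat.mul_succ, Nat.succ_mul]; ring
      calc G⁻¹ z = σ^[d * k] (G⁻¹ z) := by
            rw [Function.iterate_mul, hd]; simp [Function.iterate_id]
        _ = σ^[k * (d - 1)] (σ^[k] (G⁻¹ z)) := by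
            rw [← Function.iterate_add_apply, hkd]
        _ = σ^[k * (d - 1)] z := by rw [← hk]
  have horbA : ∀ z ∈ A, ∃ k : ℕ, z = σ^[k] x := by
    intro z hz
    rw [hA] at hz
    obtain ⟨⟨G, hG⟩, rfl⟩ := hz
    obtain ⟨k, hk⟩ := hiter G hG x hxA
    exact ⟨k, hk⟩
  refine ⟨hkeyA, horbA, hσA, ?_⟩
  have hper : Function.IsPeriodicPt σ d x := by
    unfold Function.IsPeriodicPt
    rw [hd]; rfl
  have hppos : 0 < Function.minimalPeriod σ x := hper.minimalPeriod_pos hdpos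
  have hA_eq : A = (fun k => σ^[k] x) '' Set.Iio (Function.minimalPeriod σ x) := by
    ext z
    constructor
    · intro hz
      obtain ⟨k, rfl⟩ := horbA z hz
      exact ⟨k % Function.minimalPeriod σ x, Nat.mod_lt _ hppos,
        Function.iterate_mod_minimalPeriod_eq⟩
    · rintro ⟨k, -, rfl⟩
      exact hσA k x hxA
  rw [hA_eq, Set.ncard_image_of_injOn Function.iterate_injOn_Iio_minimalPeriod]
  have h : Set.Iio (Function.minimalPeriod σ x) =
      ↑(Finset.range (Function.minimalPeriod σ x)) := by
    ext m; simp [Set.mem_Iio]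
  rw [h, Set.ncard_coe_finset, Finset.card_range]

end Aux

theorem stmt4 (X : Type) [Quandle X] [Finite X] (Y₁ Y₂ : Set X)
    (horb₁ : ∃ x : X, Y₁ = MulAction.orbit (quandleInn X) x)
    (horb₂ : ∃ x : X, Y₂ = MulAction.orbit (quandleInn X) x)
    (hdisj : Disjoint Y₁ Y₂) (hcover : Y₁ ∪ Y₂ = Set.univ)
    (hiso : ∃ g : X → X, Set.BijOn g Y₁ Y₂ ∧
      ∀ a ∈ Y₁, ∀ b ∈ Y₁, g (a ◃ b) = g a ◃ g b)
    (hcomm : ∀ a ∈ Y₁, ∀ b ∈ Y₁, a ◃ b = b)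
    (n : ℕ) (hn : Y₁.ncard = n) :
    ∃ e : X ≃ ZMod n × Bool, ∀ a b : X,
      e (a ◃ b) =
        (if (e a).2 = (e b).2 then (e b).1 else (e b).1 + 1, (e b).2) := by
  obtain ⟨x₁, hx₁⟩ := horb₁
  obtain ⟨x₂, hx₂⟩ := horb₂
  obtain ⟨g, hg, hgact⟩ := hiso
  have hcomm₂ : ∀ a ∈ Y₂, ∀ b ∈ Y₂, a ◃ b = b := by
    intro a ha b hb
    obtain ⟨a', ha', rfl⟩ := hg.surjOn ha
    obtain ⟨b', hb', rfl⟩ := hg.surjOn hb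
    rw [← hgact a' ha' b' hb', hcomm a' ha' b' hb']
  obtain ⟨hkey₁, horbit₁, hσ₁, hcard₁⟩ := aux Y₁ Y₂ x₁ x₂ hx₁ hx₂ hcover hcomm hcomm₂
  obtain ⟨hkey₂, horbit₂, hσ₂, hcard₂⟩ := aux Y₂ Y₁ x₂ x₁ hx₂ hx₁
    (by rw [Set.union_comm]; exact hcover) hcomm₂ hcomm
  set σ : X → X := fun w => x₂ ◃ w with hσdef
  set τ : X → X := fun w => x₁ ◃ w with hτdef
  have hx₁Y : x₁ ∈ Y₁ := hx₁ ▸ MulAction.mem_orbit_self x₁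
  have hx₂Y : x₂ ∈ Y₂ := hx₂ ▸ MulAction.mem_orbit_self x₂
  have hY₂card : Y₂.ncard = n := by
    rw [← hg.image_eq, Set.ncard_image_of_injOn hg.injOn, hn]
  have hp₁ : Function.minimalPeriod σ x₁ = n := by rw [← hn, hcard₁]
  have hp₂ : Function.minimalPeriod τ x₂ = n := by rw [← hY₂card, hcard₂]
  have hnpos : 0 < n := by
    rw [← hn]
    exact (Set.ncard_pos (Set.toFinite Y₁)).mpr ⟨x₁, hx₁Y⟩
  haveI : NeZero n := ⟨hnpos.ne'⟩
  have hred₁ : ∀ m : ℕ, σ^[m % n] x₁ = σ^[m] x₁ := by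
    intro m; rw [← hp₁]; exact Function.iterate_mod_minimalPeriod_eq
  have hred₂ : ∀ m : ℕ, τ^[m % n] x₂ = τ^[m] x₂ := by
    intro m; rw [← hp₂]; exact Function.iterate_mod_minimalPeriod_eq
  have hcast₁ : ∀ m : ℕ, σ^[((m : ZMod n)).val] x₁ = σ^[m] x₁ := by
    intro m; rw [ZMod.val_natCast]; exact hred₁ m
  have hcast₂ : ∀ m : ℕ, τ^[((m : ZMod n)).val] x₂ = τ^[m] x₂ := by
    intro m; rw [ZMod.val_natCast]; exact hred₂ m
  set f : ZMod n × Bool → X :=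
    fun p => if p.2 then τ^[p.1.val] x₂ else σ^[p.1.val] x₁ with hfdef
  have hf₁ : ∀ k : ZMod n, f (k, false) ∈ Y₁ := fun k => hσ₁ k.val x₁ hx₁Y
  have hf₂ : ∀ k : ZMod n, f (k, true) ∈ Y₂ := fun k => hσ₂ k.val x₂ hx₂Y
  have hne : ∀ z ∈ Y₁, z ∉ Y₂ := fun z hz hz' => Set.disjoint_left.mp hdisj hz hz'
  have hinj : Function.Injective f := by
    rintro ⟨k, bk⟩ ⟨l, bl⟩ hpq
    match bk, bl with
    | false, false =>
      simp only [hfdef, if_neg (Bool.false_ne_true ∘ id), Bool.false_eq_true, if_false] at hpq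
      have hk : k.val ∈ Set.Iio (Function.minimalPeriod σ x₁) := by
        rw [hp₁]; exact ZMod.val_lt k
      have hl : l.val ∈ Set.Iio (Function.minimalPeriod σ x₁) := by
        rw [hp₁]; exact ZMod.val_lt l
      have := Function.iterate_injOn_Iio_minimalPeriod hk hl hpq
      exact Prod.ext (ZMod.val_injective n this) rfl
    | true, true =>
      simp only [hfdef, if_true] at hpq
      have hk : k.val ∈ Set.Iio (Function.minimalPeriod τ x₂) := by
        rw [hp₂]; exact ZMod.val_lt k
      have hl : l.val ∈ Set.Iio (Function.minimalPeriod τ x₂) := by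
        rw [hp₂]; exact ZMod.val_lt l
      have := Function.iterate_injOn_Iio_minimalPeriod hk hl hpq
      exact Prod.ext (ZMod.val_injective n this) rfl
    | true, false =>
      exfalso
      have h1 : f (k, true) ∈ Y₂ := hf₂ k
      have h2 : f (l, false) ∈ Y₁ := hf₁ l
      rw [hpq] at h1
      exact hne _ h2 h1
    | false, true =>
      exfalso
      have h1 : f (k, false) ∈ Y₁ := hf₁ k
      have h2 : f (l, true) ∈ Y₂ := hf₂ l
      rw [← hpq] at h2
      exact hne _ h1 h2
  have hsurj : Function.Surjective f := by
    intro z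
    have hz : z ∈ Y₁ ∪ Y₂ := hcover ▸ Set.mem_univ z
    rcases hz with hz | hz
    · obtain ⟨k, rfl⟩ := horbit₁ z hz
      exact ⟨((k : ZMod n), false), hcast₁ k⟩
    · obtain ⟨k, rfl⟩ := horbit₂ z hz
      exact ⟨((k : ZMod n), true), hcast₂ k⟩
  set E := Equiv.ofBijective f ⟨hinj, hsurj⟩ with hEdef
  have hE : ∀ r, E.symm (f r) = r := by
    intro r
    have : E r = f r := rfl
    rw [← this, Equiv.symm_apply_apply]
  refine ⟨E.symm, ?_⟩
  intro a b
  obtain ⟨p, rfl⟩ := hsurj a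
  obtain ⟨q, rfl⟩ := hsurj b
  rw [hE p, hE q]
  have hsucc₁ : ∀ l : ZMod n, σ^[(l + 1).val] x₁ = σ (σ^[l.val] x₁) := by
    intro l
    have h1 : ((l.val + 1 : ℕ) : ZMod n) = l + 1 := by
      push_cast
      rw [ZMod.natCast_rightInverse l]
    rw [← h1, hcast₁, Function.iterate_succ_apply']
  have hsucc₂ : ∀ l : ZMod n, τ^[(l + 1).val] x₂ = τ (τ^[l.val] x₂) := by
    intro l
    have h1 : ((l.val + 1 : ℕ) : ZMod n) = l + 1 := by
      push_cast
      rw [ZMod.natCast_rightInverse l]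
    rw [← h1, hcast₂, Function.iterate_succ_apply']
  have key : f p ◃ f q = f (if p.2 = q.2 then q.1 else q.1 + 1, q.2) := by
    obtain ⟨k, bk⟩ := p
    obtain ⟨l, bl⟩ := q
    match bk, bl with
    | false, false =>
      simp only [if_pos rfl]
      exact hcomm _ (hf₁ k) _ (hf₁ l)
    | true, true =>
      simp only [if_pos rfl]
      exact hcomm₂ _ (hf₂ k) _ (hf₂ l)
    | true, false =>
      have h1 : f (k, true) ◃ f (l, false) = x₂ ◃ f (l, false) :=
        hkey₁ _ (hf₂ k) _ (hf₁ l)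
      have h2 : (if (true : Bool) = false then l else l + 1) = l + 1 := by simp
      rw [h1, h2]
      show σ (σ^[l.val] x₁) = σ^[(l + 1).val] x₁
      exact (hsucc₁ l).symm
    | false, true =>
      have h1 : f (k, false) ◃ f (l, true) = x₁ ◃ f (l, true) :=
        hkey₂ _ (hf₁ k) _ (hf₂ l)
      have h2 : (if (false : Bool) = true then l else l + 1) = l + 1 := by simp
      rw [h1, h2]
      show τ (τ^[l.val] x₂) = τ^[(l + 1).val] x₂
      exact (hsucc₂ l).symm
  rw [key, hE]
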